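/- Equivalence after extension is an equivalence relation on the class of bounded Banach space operators: it is reflexive, symmetric, and transitive. -/

import Mathlib

open ContinuousLinearMap

universe u

/-- A witness that `U ⊕ I_{X₀} = E (V ⊕ I_{Y₀}) F` with `E`, `F` invertible. -/
structure EAEWitness {X Y : Type u}
    [NormedAddCommGroup X] [NormedSpace ℂ X]
    [NormedAddCommGroup Y] [NormedSpace ℂ Y]
    (U : X →L[ℂ] X) (V : Y →L[ℂ] Y) : Type (u + 1) where
  X₀ : Type u
  Y₀ : Type u
  [instNX : NormedAddCommGroup X₀]
  [instSX : NormedSpace ℂ X₀]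
  [instCX : CompleteSpace X₀]
  [instNY : NormedAddCommGroup Y₀]
  [instSY : NormedSpace ℂ Y₀]
  [instCY : CompleteSpace Y₀]
  E : (Y × Y₀) ≃L[ℂ] (X × X₀)
  F : (X × X₀) ≃L[ℂ] (Y × Y₀)
  eq : U.prodMap (ContinuousLinearMap.id ℂ X₀) =
    (E : (Y × Y₀) →L[ℂ] (X × X₀)) ∘L (V.prodMap (ContinuousLinearMap.id ℂ Y₀)) ∘L
      (F : (X × X₀) →L[ℂ] (Y × Y₀))

/-- `U` and `V` are *equivalent after extension*. -/
def EAE {X Y : Type u}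
    [NormedAddCommGroup X] [NormedSpace ℂ X]
    [NormedAddCommGroup Y] [NormedSpace ℂ Y]
    (U : X →L[ℂ] X) (V : Y →L[ℂ] Y) : Prop :=
  Nonempty (EAEWitness U V)

/-- Associativity of products as a continuous linear equivalence. -/
def passoc (X A C : Type u) [NormedAddCommGroup X] [NormedSpace ℂ X]
    [NormedAddCommGroup A] [NormedSpace ℂ A]
    [NormedAddCommGroup C] [NormedSpace ℂ C] :
    ((X × A) × C) ≃L[ℂ] X × (A × C) :=
  { LinearEquiv.prodAssoc ℂ X A C with
    continuous_toFun := by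
      show Continuous fun p : (X × A) × C => (p.1.1, (p.1.2, p.2))
      fun_prop
    continuous_invFun := by
      show Continuous fun p : X × (A × C) => ((p.1, p.2.1), p.2.2)
      fun_prop }

@[simp] lemma passoc_apply {X A C : Type u} [NormedAddCommGroup X] [NormedSpace ℂ X]
    [NormedAddCommGroup A] [NormedSpace ℂ A]
    [NormedAddCommGroup C] [NormedSpace ℂ C] (p : (X × A) × C) :
    passoc X A C p = (p.1.1, (p.1.2, p.2)) := rfl

@[simp] lemma passoc_symm_apply {X A C : Type u} [NormedAddCommGroup X] [NormedSpace ℂ X]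
    [NormedAddCommGroup A] [NormedSpace ℂ A]
    [NormedAddCommGroup C] [NormedSpace ℂ C] (p : X × (A × C)) :
    (passoc X A C).symm p = ((p.1, p.2.1), p.2.2) := rfl

lemma clm_prodMap_apply {X A Y B : Type u} [NormedAddCommGroup X] [NormedSpace ℂ X]
    [NormedAddCommGroup A] [NormedSpace ℂ A] [NormedAddCommGroup Y] [NormedSpace ℂ Y]
    [NormedAddCommGroup B] [NormedSpace ℂ B] (f : X →L[ℂ] Y) (g : A →L[ℂ] B) (p : X × A) :
    (f.prodMap g) p = (f p.1, g p.2) := rfl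

/-- Equivalence after extension is reflexive, symmetric and transitive. -/
theorem eae_equivalence_relation :
    (∀ (X : Type u) [NormedAddCommGroup X] [NormedSpace ℂ X] [CompleteSpace X]
      (U : X →L[ℂ] X), EAE U U) ∧
    (∀ (X Y : Type u) [NormedAddCommGroup X] [NormedSpace ℂ X] [CompleteSpace X]
      [NormedAddCommGroup Y] [NormedSpace ℂ Y] [CompleteSpace Y]
      (U : X →L[ℂ] X) (V : Y →L[ℂ] Y), EAE U V → EAE V U) ∧
    (∀ (X Y Z : Type u) [NormedAddCommGroup X] [NormedSpace ℂ X] [CompleteSpace X]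
      [NormedAddCommGroup Y] [NormedSpace ℂ Y] [CompleteSpace Y]
      [NormedAddCommGroup Z] [NormedSpace ℂ Z] [CompleteSpace Z]
      (U : X →L[ℂ] X) (V : Y →L[ℂ] Y) (W : Z →L[ℂ] Z),
      EAE U V → EAE V W → EAE U W) := by
  refine ⟨?_, ?_, ?_⟩
  · intro X _ _ _ U
    exact ⟨⟨X, X, ContinuousLinearEquiv.refl ℂ (X × X), ContinuousLinearEquiv.refl ℂ (X × X),
      by refine ContinuousLinearMap.ext fun p => ?_; rfl⟩⟩
  · intro X Y _ _ _ _ _ _ U V h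
    obtain ⟨w⟩ := h
    letI := w.instNX; letI := w.instSX; letI := w.instCX
    letI := w.instNY; letI := w.instSY; letI := w.instCY
    refine ⟨⟨w.Y₀, w.X₀, w.E.symm, w.F.symm, ?_⟩⟩
    refine ContinuousLinearMap.ext fun p => ?_
    have h := ContinuousLinearMap.ext_iff.mp w.eq (w.F.symm p)
    simp only [coe_comp', Function.comp_apply, ContinuousLinearEquiv.coe_coe,
      ContinuousLinearEquiv.apply_symm_apply] at h ⊢
    rw [h, ContinuousLinearEquiv.symm_apply_apply]
  · intro X Y Z _ _ _ _ _ _ _ _ _ U V W h1 h2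
    obtain ⟨w1⟩ := h1
    obtain ⟨w2⟩ := h2
    letI := w1.instNX; letI := w1.instSX; letI := w1.instCX
    letI := w1.instNY; letI := w1.instSY; letI := w1.instCY
    letI := w2.instNX; letI := w2.instSX; letI := w2.instCX
    letI := w2.instNY; letI := w2.instSY; letI := w2.instCY
    refine ⟨⟨w1.X₀ × w2.X₀, w2.Y₀ × w1.Y₀, ?_, ?_, ?_⟩⟩
    · exact (passoc Z w2.Y₀ w1.Y₀).symm.trans
        ((w2.E.prodCongr (.refl ℂ w1.Y₀)).trans
        ((passoc Y w2.X₀ w1.Y₀).trans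
        (((ContinuousLinearEquiv.refl ℂ Y).prodCongr (ContinuousLinearEquiv.prodComm ℂ w2.X₀ w1.Y₀)).trans
        ((passoc Y w1.Y₀ w2.X₀).symm.trans
        ((w1.E.prodCongr (.refl ℂ w2.X₀)).trans (passoc X w1.X₀ w2.X₀))))))
    · exact (passoc X w1.X₀ w2.X₀).symm.trans
        ((w1.F.prodCongr (.refl ℂ w2.X₀)).trans
        ((passoc Y w1.Y₀ w2.X₀).trans
        (((ContinuousLinearEquiv.refl ℂ Y).prodCongr (ContinuousLinearEquiv.prodComm ℂ w1.Y₀ w2.X₀)).trans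
        ((passoc Y w2.X₀ w1.Y₀).symm.trans
        ((w2.F.prodCongr (.refl ℂ w1.Y₀)).trans (passoc Z w2.Y₀ w1.Y₀))))))
    · refine ContinuousLinearMap.ext fun p => ?_
      obtain ⟨x, a, c⟩ := p
      have h1 := ContinuousLinearMap.ext_iff.mp w1.eq (x, a)
      have h2 := ContinuousLinearMap.ext_iff.mp w2.eq ((w1.F (x, a)).1, c)
      simp only [coe_comp', Function.comp_apply, ContinuousLinearEquiv.coe_coe,
        clm_prodMap_apply, coe_id', id_eq,
        ContinuousLinearEquiv.trans_apply, ContinuousLinearEquiv.prodCongr_apply,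
        ContinuousLinearEquiv.coe_refl', ContinuousLinearEquiv.prodComm_apply,
        passoc_apply, passoc_symm_apply, Prod.fst_swap, Prod.snd_swap] at h1 h2 ⊢
      rw [← h2]
      simp only []
      rw [← h1]
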